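/- There exists a constant C > 0 such that for every θ ∈ [−π, π] and every twice continuously differentiable π-periodic function u : ℝ → ℂ, one has (∫_0^π |u''(y)|² dy)^{1/2} ≤ (2/π²) (∫_0^π |π² u''(y) + 2iθπ u'(y) + (4π² − θ²) u(y)|² dy)^{1/2} + C (∫_0^π |u(y)|² dy)^{1/2}. -/

import Mathlib

open MeasureTheory Real Complex

private lemma memL2_cont {f : ℝ → ℝ} (hf : Continuous f) :
    MemLp f (ENNReal.ofReal 2) (volume.restrict (Set.Ioc (0:ℝ) π)) := by
  obtain ⟨C, hC⟩ := (isCompact_Icc (a := (0:ℝ)) (b := π)).exists_bound_of_continuousOn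
    hf.continuousOn
  refine MemLp.of_bound hf.aestronglyMeasurable C ?_
  refine (ae_restrict_iff' measurableSet_Ioc).2 (Filter.Eventually.of_forall fun x hx => ?_)
  exact hC x (Set.mem_Icc_of_Ioc hx)

private lemma cs_interval {f g : ℝ → ℝ} (hf : Continuous f) (hg : Continuous g)
    (hf0 : ∀ x, 0 ≤ f x) (hg0 : ∀ x, 0 ≤ g x) :
    ∫ y in (0:ℝ)..π, f y * g y ≤
      Real.sqrt (∫ y in (0:ℝ)..π, f y ^ 2) * Real.sqrt (∫ y in (0:ℝ)..π, g y ^ 2) := by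
  have hpi : (0:ℝ) ≤ π := pi_pos.le
  rw [intervalIntegral.integral_of_le hpi, intervalIntegral.integral_of_le hpi,
    intervalIntegral.integral_of_le hpi]
  have hpq : Real.HolderConjugate 2 2 := Real.HolderConjugate.two_two
  have h := integral_mul_le_Lp_mul_Lq_of_nonneg (μ := volume.restrict (Set.Ioc (0:ℝ) π)) hpq
    (Filter.Eventually.of_forall hf0) (Filter.Eventually.of_forall hg0)
    (memL2_cont hf) (memL2_cont hg)
  calc ∫ y in Set.Ioc (0:ℝ) π, f y * g y
      ≤ (∫ y in Set.Ioc (0:ℝ) π, f y ^ (2:ℝ)) ^ (1/(2:ℝ)) *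
        (∫ y in Set.Ioc (0:ℝ) π, g y ^ (2:ℝ)) ^ (1/(2:ℝ)) := h
    _ = Real.sqrt (∫ y in Set.Ioc (0:ℝ) π, f y ^ 2) *
        Real.sqrt (∫ y in Set.Ioc (0:ℝ) π, g y ^ 2) := by
        rw [Real.sqrt_eq_rpow, Real.sqrt_eq_rpow]
        congr 2 <;> · apply integral_congr_ae; filter_upwards with x
                      rw [← Real.rpow_natCast]; norm_num

private lemma sq_integral_nonneg {f : ℝ → ℂ} :
    0 ≤ ∫ y in (0:ℝ)..π, ‖f y‖ ^ 2 :=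
  intervalIntegral.integral_nonneg pi_pos.le (fun x _ => by positivity)

private lemma minkowski_interval {f g : ℝ → ℂ} (hf : Continuous f) (hg : Continuous g) :
    Real.sqrt (∫ y in (0:ℝ)..π, ‖f y + g y‖ ^ 2) ≤
      Real.sqrt (∫ y in (0:ℝ)..π, ‖f y‖ ^ 2) + Real.sqrt (∫ y in (0:ℝ)..π, ‖g y‖ ^ 2) := by
  set A := Real.sqrt (∫ y in (0:ℝ)..π, ‖f y‖ ^ 2) with hA
  set B := Real.sqrt (∫ y in (0:ℝ)..π, ‖g y‖ ^ 2) with hB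
  have hA0 : 0 ≤ A := Real.sqrt_nonneg _
  have hB0 : 0 ≤ B := Real.sqrt_nonneg _
  have hAsq : A ^ 2 = ∫ y in (0:ℝ)..π, ‖f y‖ ^ 2 := Real.sq_sqrt sq_integral_nonneg
  have hBsq : B ^ 2 = ∫ y in (0:ℝ)..π, ‖g y‖ ^ 2 := Real.sq_sqrt sq_integral_nonneg
  have hcs : ∫ y in (0:ℝ)..π, ‖f y‖ * ‖g y‖ ≤ A * B :=
    cs_interval hf.norm hg.norm (fun x => norm_nonneg _) (fun x => norm_nonneg _)
  have hint1 : IntervalIntegrable (fun y => ‖f y‖ ^ 2) volume 0 π :=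
    (hf.norm.pow 2).intervalIntegrable 0 π
  have hint2 : IntervalIntegrable (fun y => ‖g y‖ ^ 2) volume 0 π :=
    (hg.norm.pow 2).intervalIntegrable 0 π
  have hint3 : IntervalIntegrable (fun y => ‖f y‖ * ‖g y‖) volume 0 π :=
    (hf.norm.mul hg.norm).intervalIntegrable 0 π
  have key : (∫ y in (0:ℝ)..π, ‖f y + g y‖ ^ 2) ≤ (A + B) ^ 2 := by
    have hmono : (∫ y in (0:ℝ)..π, ‖f y + g y‖ ^ 2) ≤
        ∫ y in (0:ℝ)..π, (‖f y‖ ^ 2 + 2 * (‖f y‖ * ‖g y‖) + ‖g y‖ ^ 2) := by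
      apply intervalIntegral.integral_mono_on pi_pos.le
        (((hf.add hg).norm.pow 2).intervalIntegrable 0 π)
        (by apply IntervalIntegrable.add; apply IntervalIntegrable.add
            exacts [hint1, hint3.const_mul 2, hint2])
      intro x _
      show ‖f x + g x‖ ^ 2 ≤ _
      have h1 := norm_add_le (f x) (g x)
      nlinarith [norm_nonneg (f x), norm_nonneg (g x), norm_nonneg (f x + g x)]
    have hsplit : (∫ y in (0:ℝ)..π, (‖f y‖ ^ 2 + 2 * (‖f y‖ * ‖g y‖) + ‖g y‖ ^ 2))
        = (∫ y in (0:ℝ)..π, ‖f y‖ ^ 2) + 2 * (∫ y in (0:ℝ)..π, ‖f y‖ * ‖g y‖)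
          + (∫ y in (0:ℝ)..π, ‖g y‖ ^ 2) := by
      rw [intervalIntegral.integral_add (hint1.add (hint3.const_mul 2)) hint2,
        intervalIntegral.integral_add hint1 (hint3.const_mul 2),
        intervalIntegral.integral_const_mul]
    nlinarith [hmono, hsplit, hcs, hAsq, hBsq]
  calc Real.sqrt (∫ y in (0:ℝ)..π, ‖f y + g y‖ ^ 2) ≤ Real.sqrt ((A + B) ^ 2) :=
        Real.sqrt_le_sqrt key
    _ = A + B := Real.sqrt_sq (by positivity)

private lemma sqrt_int_const_mul (c : ℂ) (f : ℝ → ℂ) :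
    Real.sqrt (∫ y in (0:ℝ)..π, ‖c * f y‖ ^ 2) =
      ‖c‖ * Real.sqrt (∫ y in (0:ℝ)..π, ‖f y‖ ^ 2) := by
  simp_rw [norm_mul, mul_pow]
  rw [intervalIntegral.integral_const_mul, Real.sqrt_mul (by positivity),
    Real.sqrt_sq (norm_nonneg c)]

private lemma deriv_interp {u : ℝ → ℂ} (hud : Differentiable ℝ u)
    (hd1d : Differentiable ℝ (deriv u)) (hcd2 : Continuous (deriv (deriv u)))
    (per : ∀ y, u (y + π) = u y) :
    Real.sqrt (∫ y in (0:ℝ)..π, ‖deriv u y‖ ^ 2) ≤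
      (1/4) * Real.sqrt (∫ y in (0:ℝ)..π, ‖deriv (deriv u) y‖ ^ 2)
        + Real.sqrt (∫ y in (0:ℝ)..π, ‖u y‖ ^ 2) := by
  have hcu : Continuous u := hud.continuous
  have hcd1 : Continuous (deriv u) := hd1d.continuous
  have hper1 : deriv u π = deriv u 0 := by
    have e : (fun x => u (x + π)) = u := funext per
    have h0 : deriv u (0 + π) = deriv u 0 := by
      rw [← deriv_comp_add_const u π 0, e]
    simpa using h0
  have huπ : u π = u 0 := by simpa using per 0
  have ibp : (∫ y in (0:ℝ)..π,
      (deriv (deriv u) y * star (u y) + deriv u y * star (deriv u y)))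
      = deriv u π * star (u π) - deriv u 0 * star (u 0) :=
    intervalIntegral.integral_deriv_mul_eq_sub
      (fun x _ => (hd1d x).hasDerivAt)
      (fun x _ => ((hud x).hasDerivAt).star)
      (hcd2.intervalIntegrable 0 π)
      ((hcd1.star).intervalIntegrable 0 π)
  rw [hper1, huπ, sub_self] at ibp
  have hi1 : IntervalIntegrable (fun y => deriv (deriv u) y * star (u y)) volume 0 π :=
    (hcd2.mul hcu.star).intervalIntegrable 0 π
  have hi2 : IntervalIntegrable (fun y => deriv u y * star (deriv u y)) volume 0 π :=
    (hcd1.mul hcd1.star).intervalIntegrable 0 π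
  rw [intervalIntegral.integral_add hi1 hi2] at ibp
  have heq2 : (∫ y in (0:ℝ)..π, deriv u y * star (deriv u y))
      = ((∫ y in (0:ℝ)..π, ‖deriv u y‖ ^ 2 : ℝ) : ℂ) := by
    rw [← intervalIntegral.integral_ofReal]
    apply intervalIntegral.integral_congr
    intro y _
    simp [Complex.star_def, Complex.mul_conj, Complex.normSq_eq_norm_sq]
  set A := Real.sqrt (∫ y in (0:ℝ)..π, ‖deriv (deriv u) y‖ ^ 2) with hAdef
  set N := Real.sqrt (∫ y in (0:ℝ)..π, ‖u y‖ ^ 2) with hNdef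
  set B2 := ∫ y in (0:ℝ)..π, ‖deriv u y‖ ^ 2 with hB2def
  have hB2AN : B2 ≤ A * N := by
    have hB2 : (B2 : ℂ) = -(∫ y in (0:ℝ)..π, deriv (deriv u) y * star (u y)) := by
      rw [← heq2]; linear_combination ibp
    have hre : B2 = (-(∫ y in (0:ℝ)..π, deriv (deriv u) y * star (u y))).re := by
      rw [← hB2]; simp
    have h1 : B2 ≤ ‖∫ y in (0:ℝ)..π, deriv (deriv u) y * star (u y)‖ := by
      rw [hre]
      calc (-(∫ y in (0:ℝ)..π, deriv (deriv u) y * star (u y))).re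
          ≤ ‖(-(∫ y in (0:ℝ)..π, deriv (deriv u) y * star (u y)))‖ :=
            Complex.re_le_norm _
        _ = ‖∫ y in (0:ℝ)..π, deriv (deriv u) y * star (u y)‖ := by
            rw [norm_neg]
    have h2 : ‖∫ y in (0:ℝ)..π, deriv (deriv u) y * star (u y)‖
        ≤ ∫ y in (0:ℝ)..π, ‖deriv (deriv u) y‖ * ‖u y‖ := by
      have := intervalIntegral.norm_integral_le_integral_norm
        (f := fun y => deriv (deriv u) y * star (u y)) (μ := volume) pi_pos.le
      simpa [norm_mul] using this
    have h3 := cs_interval hcd2.norm hcu.norm (fun x => norm_nonneg _) (fun x => norm_nonneg _)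
    exact h1.trans (h2.trans h3)
  have hA0 : 0 ≤ A := Real.sqrt_nonneg _
  have hN0 : 0 ≤ N := Real.sqrt_nonneg _
  calc Real.sqrt B2 ≤ Real.sqrt (((1/4) * A + N) ^ 2) := by
        apply Real.sqrt_le_sqrt
        nlinarith [hB2AN, sq_nonneg (A/4 - N)]
    _ = (1/4) * A + N := Real.sqrt_sq (by positivity)

theorem bloch_second_derivative_bound :
    ∃ C : ℝ, 0 < C ∧
      ∀ θ ∈ Set.Icc (-π) π, ∀ u : ℝ → ℂ, ContDiff ℝ 2 u →
        (∀ y, u (y + π) = u y) →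
        Real.sqrt (∫ y in (0:ℝ)..π, ‖deriv (deriv u) y‖ ^ 2)
          ≤ (2 / π ^ 2) * Real.sqrt (∫ y in (0:ℝ)..π,
              ‖(π : ℂ) ^ 2 * deriv (deriv u) y
                + 2 * Complex.I * (θ : ℂ) * (π : ℂ) * deriv u y
                + ((4 * (π : ℂ) ^ 2 - (θ : ℂ) ^ 2)) * u y‖ ^ 2)
            + C * Real.sqrt (∫ y in (0:ℝ)..π, ‖u y‖ ^ 2) := by
  refine ⟨12, by norm_num, ?_⟩
  intro θ hθ u hu per
  rw [show (2 : WithTop ℕ∞) = 1 + 1 by norm_num, contDiff_succ_iff_deriv] at hu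
  have hud : Differentiable ℝ u := hu.1
  have h1 := hu.2.2
  rw [contDiff_one_iff_deriv] at h1
  have hd1d : Differentiable ℝ (deriv u) := h1.1
  have hcd2 : Continuous (deriv (deriv u)) := h1.2
  have hcd1 : Continuous (deriv u) := hd1d.continuous
  have hcu : Continuous u := hud.continuous
  set f : ℝ → ℂ := fun y => (π : ℂ) ^ 2 * deriv (deriv u) y
                + 2 * Complex.I * (θ : ℂ) * (π : ℂ) * deriv u y
                + ((4 * (π : ℂ) ^ 2 - (θ : ℂ) ^ 2)) * u y with hfdef
  have hcf : Continuous f := by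
    apply Continuous.add; apply Continuous.add
    exacts [continuous_const.mul hcd2, continuous_const.mul hcd1, continuous_const.mul hcu]
  set A := Real.sqrt (∫ y in (0:ℝ)..π, ‖deriv (deriv u) y‖ ^ 2) with hAdef
  set B := Real.sqrt (∫ y in (0:ℝ)..π, ‖deriv u y‖ ^ 2) with hBdef
  set N := Real.sqrt (∫ y in (0:ℝ)..π, ‖u y‖ ^ 2) with hNdef
  set L := Real.sqrt (∫ y in (0:ℝ)..π, ‖f y‖ ^ 2) with hLdef
  have hA0 : 0 ≤ A := Real.sqrt_nonneg _
  have hB0 : 0 ≤ B := Real.sqrt_nonneg _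
  have hN0 : 0 ≤ N := Real.sqrt_nonneg _
  have hL0 : 0 ≤ L := Real.sqrt_nonneg _
  have hθπ : |θ| ≤ π := abs_le.mpr ⟨hθ.1, hθ.2⟩
  have hθsq : θ ^ 2 ≤ π ^ 2 := by nlinarith [abs_nonneg θ, _root_.sq_abs θ]
  -- norms of constants
  have hn1 : ‖((π:ℝ) : ℂ) ^ 2‖ = π ^ 2 := by
    rw [norm_pow, Complex.norm_real, Real.norm_eq_abs, _root_.abs_of_nonneg pi_pos.le]
  have hn2 : ‖-(2 * Complex.I * (θ : ℂ) * (π : ℂ))‖ ≤ 2 * π ^ 2 := by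
    rw [norm_neg, norm_mul, norm_mul, norm_mul]
    simp only [Complex.norm_ofNat, Complex.norm_I, Complex.norm_real, Real.norm_eq_abs]
    rw [_root_.abs_of_nonneg pi_pos.le]
    nlinarith [hθπ, abs_nonneg θ, pi_pos]
  have hn3 : ‖-(4 * ((π:ℝ) : ℂ) ^ 2 - (θ : ℂ) ^ 2)‖ ≤ 4 * π ^ 2 := by
    rw [norm_neg]
    have : (4 * ((π:ℝ) : ℂ) ^ 2 - (θ : ℂ) ^ 2) = (((4 * π ^ 2 - θ ^ 2 : ℝ)) : ℂ) := by
      push_cast; ring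
    rw [this, Complex.norm_real, Real.norm_eq_abs, _root_.abs_of_nonneg (by nlinarith)]
    nlinarith [sq_nonneg θ]
  -- Minkowski chain
  have hmain : π ^ 2 * A ≤ L + 2 * π ^ 2 * B + 4 * π ^ 2 * N := by
    have hsplit : (fun y => ((π:ℝ) : ℂ) ^ 2 * deriv (deriv u) y)
        = fun y => (f y + (-(2 * Complex.I * (θ : ℂ) * (π : ℂ))) * deriv u y)
            + (-(4 * ((π:ℝ) : ℂ) ^ 2 - (θ : ℂ) ^ 2)) * u y := by
      funext y; rw [hfdef]; ring
    have e1 : Real.sqrt (∫ y in (0:ℝ)..π, ‖((π:ℝ) : ℂ) ^ 2 * deriv (deriv u) y‖ ^ 2)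
        = π ^ 2 * A := by rw [sqrt_int_const_mul, hn1]
    have step1 : Real.sqrt (∫ y in (0:ℝ)..π, ‖((π:ℝ) : ℂ) ^ 2 * deriv (deriv u) y‖ ^ 2)
        ≤ Real.sqrt (∫ y in (0:ℝ)..π,
            ‖f y + (-(2 * Complex.I * (θ : ℂ) * (π : ℂ))) * deriv u y‖ ^ 2)
          + Real.sqrt (∫ y in (0:ℝ)..π, ‖(-(4 * ((π:ℝ) : ℂ) ^ 2 - (θ : ℂ) ^ 2)) * u y‖ ^ 2) := by
      rw [show (∫ y in (0:ℝ)..π, ‖((π:ℝ) : ℂ) ^ 2 * deriv (deriv u) y‖ ^ 2)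
          = ∫ y in (0:ℝ)..π, ‖(f y + (-(2 * Complex.I * (θ : ℂ) * (π : ℂ))) * deriv u y)
              + (-(4 * ((π:ℝ) : ℂ) ^ 2 - (θ : ℂ) ^ 2)) * u y‖ ^ 2 by
        apply intervalIntegral.integral_congr; intro y _
        simp only [congrFun hsplit y]]
      exact minkowski_interval (hcf.add (continuous_const.mul hcd1)) (continuous_const.mul hcu)
    have step2 : Real.sqrt (∫ y in (0:ℝ)..π,
            ‖f y + (-(2 * Complex.I * (θ : ℂ) * (π : ℂ))) * deriv u y‖ ^ 2)
        ≤ L + Real.sqrt (∫ y in (0:ℝ)..π,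
            ‖(-(2 * Complex.I * (θ : ℂ) * (π : ℂ))) * deriv u y‖ ^ 2) :=
      minkowski_interval hcf (continuous_const.mul hcd1)
    have e2 : Real.sqrt (∫ y in (0:ℝ)..π,
          ‖(-(2 * Complex.I * (θ : ℂ) * (π : ℂ))) * deriv u y‖ ^ 2)
        ≤ 2 * π ^ 2 * B := by
      rw [sqrt_int_const_mul]
      exact mul_le_mul_of_nonneg_right hn2 hB0
    have e3 : Real.sqrt (∫ y in (0:ℝ)..π,
          ‖(-(4 * ((π:ℝ) : ℂ) ^ 2 - (θ : ℂ) ^ 2)) * u y‖ ^ 2)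
        ≤ 4 * π ^ 2 * N := by
      rw [sqrt_int_const_mul]
      exact mul_le_mul_of_nonneg_right hn3 hN0
    calc π ^ 2 * A = Real.sqrt (∫ y in (0:ℝ)..π, ‖((π:ℝ) : ℂ) ^ 2 * deriv (deriv u) y‖ ^ 2) :=
          e1.symm
      _ ≤ _ := step1
      _ ≤ (L + Real.sqrt (∫ y in (0:ℝ)..π,
            ‖(-(2 * Complex.I * (θ : ℂ) * (π : ℂ))) * deriv u y‖ ^ 2))
          + Real.sqrt (∫ y in (0:ℝ)..π,
            ‖(-(4 * ((π:ℝ) : ℂ) ^ 2 - (θ : ℂ) ^ 2)) * u y‖ ^ 2) := by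
          exact add_le_add_left step2 _
      _ ≤ (L + 2 * π ^ 2 * B) + 4 * π ^ 2 * N := add_le_add (add_le_add_right e2 L) e3
      _ = L + 2 * π ^ 2 * B + 4 * π ^ 2 * N := by ring
  have hB : B ≤ (1/4) * A + N := deriv_interp hud hd1d hcd2 per
  have hpi2 : (0:ℝ) < π ^ 2 := by positivity
  have hfinal : (π ^ 2 / 2) * A ≤ L + 6 * π ^ 2 * N := by nlinarith [hmain, hB]
  calc A = (2 / π ^ 2) * ((π ^ 2 / 2) * A) := by field_simp
    _ ≤ (2 / π ^ 2) * (L + 6 * π ^ 2 * N) := by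
        apply mul_le_mul_of_nonneg_left hfinal (by positivity)
    _ = (2 / π ^ 2) * L + 12 * N := by field_simp; ring
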